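/- The rank function φ is strictly monotone with respect to strict cumulativity: for all M, N ∈ 𝒯 and i ∈ ω, if M ≺_i N then φ(M) < φ(N); consequently M ≺ N implies φ(M) < φ(N). -/

import Mathlib

namespace ECC

/-- Terms of Luo's Extended Calculus of Constructions, in de Bruijn representation. -/
inductive Term : Type
  | var   : ℕ → Term
  | prop  : Term
  | type  : ℕ → Term
  | pi    : Term → Term → Term
  | sigma : Term → Term → Term
  | lam   : Term → Term → Term
  | app   : Term → Term → Term
  | pair  : Term → Term → Term → Term   -- ⟨M, N⟩_B with type annotation B
  | proj1 : Term → Term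
  | proj2 : Term → Term
deriving DecidableEq

/-- Lift (shift by `d`) all de Bruijn indices ≥ `k`. -/
def lift (d : ℕ) : ℕ → Term → Term
  | k, .var n       => if n < k then .var n else .var (n + d)
  | _, .prop        => .prop
  | _, .type j      => .type j
  | k, .pi A B      => .pi (lift d k A) (lift d (k+1) B)
  | k, .sigma A B   => .sigma (lift d k A) (lift d (k+1) B)
  | k, .lam A M     => .lam (lift d k A) (lift d (k+1) M)
  | k, .app M N     => .app (lift d k M) (lift d k N)
  | k, .pair M N B  => .pair (lift d k M) (lift d k N) (lift d k B)
  | k, .proj1 M     => .proj1 (lift d k M)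
  | k, .proj2 M     => .proj2 (lift d k M)

/-- Capture-avoiding substitution `[N/x]A` of the term `N` for the variable `x` in `A`. -/
def subst (N : Term) : ℕ → Term → Term
  | k, .var n       => if n < k then .var n else if n = k then lift k 0 N else .var (n - 1)
  | _, .prop        => .prop
  | _, .type j      => .type j
  | k, .pi A B      => .pi (subst N k A) (subst N (k+1) B)
  | k, .sigma A B   => .sigma (subst N k A) (subst N (k+1) B)
  | k, .lam A M     => .lam (subst N k A) (subst N (k+1) M)
  | k, .app M M'    => .app (subst N k M) (subst N k M')
  | k, .pair M M' B => .pair (subst N k M) (subst N k M') (subst N k B)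
  | k, .proj1 M     => .proj1 (subst N k M)
  | k, .proj2 M     => .proj2 (subst N k M)

/-- `[N/x₀]B` : substitution for the outermost bound variable. -/
def subst0 (B N : Term) : Term := subst N 0 B

/-- One-step reduction (β together with the projection reductions, closed under all
term-formation congruences). -/
inductive Red : Term → Term → Prop
  | beta    : Red (.app (.lam A M) N) (subst0 M N)
  | pr1     : Red (.proj1 (.pair M N B)) M
  | pr2     : Red (.proj2 (.pair M N B)) N
  | piL     : Red A A' → Red (.pi A B) (.pi A' B)
  | piR     : Red B B' → Red (.pi A B) (.pi A B')
  | sigmaL  : Red A A' → Red (.sigma A B) (.sigma A' B)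
  | sigmaR  : Red B B' → Red (.sigma A B) (.sigma A B')
  | lamL    : Red A A' → Red (.lam A M) (.lam A' M)
  | lamR    : Red M M' → Red (.lam A M) (.lam A M')
  | appL    : Red M M' → Red (.app M N) (.app M' N)
  | appR    : Red N N' → Red (.app M N) (.app M N')
  | pairL   : Red M M' → Red (.pair M N B) (.pair M' N B)
  | pairR   : Red N N' → Red (.pair M N B) (.pair M N' B)
  | pairB   : Red B B' → Red (.pair M N B) (.pair M N B')
  | proj1C  : Red M M' → Red (.proj1 M) (.proj1 M')
  | proj2C  : Red M M' → Red (.proj2 M) (.proj2 M')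

/-- Conversion `≃` : the equivalence relation generated by reduction. -/
def Conv : Term → Term → Prop := Relation.EqvGen Red

/-- `A` has a normal form. -/
def HasNF (A : Term) : Prop :=
  ∃ B, Relation.ReflTransGen Red A B ∧ ∀ C, ¬ Red B C

/-- `𝒯` : the set of normalisable terms. -/
def Tset : Set Term := {A | HasNF A}

/-- Universes are `Prop` and the `Type_j`. -/
def IsUniv (T : Term) : Prop := T = .prop ∨ ∃ j, T = .type j

/-- The cumulativity relation `⪯` : the smallest preorder containing conversion,
the universe order, congruence for Π in the codomain, and congruence for Σ in both
components. -/
inductive Cum : Term → Term → Prop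
  | conv     : Conv A B → Cum A B
  | propType : Cum .prop (.type 0)
  | typeType : j ≤ k → Cum (.type j) (.type k)
  | pi       : Conv A A' → Cum B B' → Cum (.pi A B) (.pi A' B')
  | sigma    : Cum A A' → Cum B B' → Cum (.sigma A B) (.sigma A' B')
  | trans    : Cum A B → Cum B C → Cum A C

/-- The strict cumulativity relation `≺` : `A ⪯ B` and `A ≄ B`. -/
def SCum (A B : Term) : Prop := Cum A B ∧ ¬ Conv A B

/-- The stratified cumulativity relations `⪯ᵢ`. -/
inductive CumL : ℕ → Term → Term → Prop
  | conv     : Conv A B → CumL i A B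
  | propType : CumL i .prop (.type j)
  | typeType : j < k → CumL i (.type j) (.type k)
  | succ     : CumL i A B → CumL (i+1) A B
  | pi       : Conv M (.pi A B) → Conv N (.pi A' B') → Conv A A' → CumL i B B' →
               CumL (i+1) M N
  | sigma    : Conv M (.sigma A B) → Conv N (.sigma A' B') → CumL i A A' → CumL i B B' →
               CumL (i+1) M N

/-- Strict stratified cumulativity `≺ᵢ`. -/
def SCumL (i : ℕ) (A B : Term) : Prop := CumL i A B ∧ ¬ Conv A B

/-- Is the outermost symbol of a term Π or Σ? -/
def BinderHeaded : Term → Prop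
  | .pi _ _    => True
  | .sigma _ _ => True
  | _          => False

/-- The base stratum: normalisable terms not convertible to a binder-headed
normalisable term. -/
def Base : Set Term :=
  {T | HasNF T ∧ ¬ ∃ B, HasNF B ∧ BinderHeaded B ∧ Conv T B}

/-- The stratification `(Π_n, Σ_n)` of `𝒯`. -/
def Strata : ℕ → Set Term × Set Term
  | 0 => (Base, Base)
  | n+1 =>
    ({T | ∃ k l, ∃ _ : k + l = n, ∃ A B, HasNF (Term.pi A B) ∧ Conv T (Term.pi A B) ∧
        A ∈ (Strata k).1 ∪ (Strata k).2 ∧ B ∈ (Strata l).1 ∪ (Strata l).2},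
     {T | ∃ k l, ∃ _ : k + l = n, ∃ A B, HasNF (Term.sigma A B) ∧ Conv T (Term.sigma A B) ∧
        A ∈ (Strata k).1 ∪ (Strata k).2 ∧ B ∈ (Strata l).1 ∪ (Strata l).2})
termination_by n => n
decreasing_by all_goals omega

/-- The stratum `Π_n`. -/
def PiStr (n : ℕ) : Set Term := (Strata n).1

/-- The stratum `Σ_n`. -/
def SigStr (n : ℕ) : Set Term := (Strata n).2

/-- The specification of the rank function `φ : 𝒯 → ω`. -/
def PhiSpec (φ : Term → ℕ) : Prop :=
  (∀ M N, HasNF M → HasNF N → Conv M N → φ M = φ N) ∧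
  (∀ T, HasNF T → Conv T .prop → φ T = 2) ∧
  (∀ T j, HasNF T → Conv T (.type j) → φ T = 3 + j) ∧
  (∀ T, T ∈ PiStr 0 → ¬ Conv T .prop → (∀ j, ¬ Conv T (.type j)) → φ T = 1) ∧
  (∀ T A B, HasNF T → (Conv T (.pi A B) ∨ Conv T (.sigma A B)) → φ T = φ A * φ B) ∧
  (∀ T, HasNF T → 0 < φ T)

mutual
/-- Valid contexts of ECC (de Bruijn: the head of the list is the most recent entry). -/
inductive Valid : List Term → Prop
  | nil  : Valid []
  | cons : Typing Γ A (.type j) → Valid (A :: Γ)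

/-- The typing judgement `Γ ⊢ M : A` of ECC. -/
inductive Typing : List Term → Term → Term → Prop
  | prop  : Valid Γ → Typing Γ .prop (.type 0)
  | type  : Valid Γ → Typing Γ (.type j) (.type (j+1))
  | var   : Valid Γ → Γ[n]? = some A → Typing Γ (.var n) (lift (n+1) 0 A)
  | pi1   : Typing Γ A (.type j) → Typing (A :: Γ) B .prop →
            Typing Γ (.pi A B) .prop
  | pi2   : Typing Γ A (.type j) → Typing (A :: Γ) B (.type j) →
            Typing Γ (.pi A B) (.type j)
  | sig   : Typing Γ A (.type j) → Typing (A :: Γ) B (.type j) →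
            Typing Γ (.sigma A B) (.type j)
  | lam   : Typing (A :: Γ) M B → Typing Γ (.lam A M) (.pi A B)
  | app   : Typing Γ M (.pi A B) → Typing Γ N A → Typing Γ (.app M N) (subst0 B N)
  | pair  : Typing Γ M A → Typing Γ N (subst0 B M) → Typing (A :: Γ) B (.type j) →
            Typing Γ (.pair M N (.sigma A B)) (.sigma A B)
  | proj1 : Typing Γ M (.sigma A B) → Typing Γ (.proj1 M) A
  | proj2 : Typing Γ M (.sigma A B) → Typing Γ (.proj2 M) (subst0 B (.proj1 M))
  | cum   : Typing Γ M A → Typing Γ B (.type j) → Cum A B → Typing Γ M B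
end

/-- `Type_j` for `j ∈ ℤ`, with the convention `Type_{-1} = Prop`. -/
def TType (j : ℤ) : Term := if j < 0 then .prop else .type j.toNat

/-- The typing judgement of the restricted system `ECC⁻`: the rules
`(Π2)(Σ)(app)(pair)(⪯)` of ECC are replaced by `(Π2')(Σ')(app')(pair')` and `(≃)_ρ`. -/
inductive TypingM : List Term → Term → Term → Prop
  | prop  : Valid Γ → TypingM Γ .prop (.type 0)
  | type  : Valid Γ → TypingM Γ (.type j) (.type (j+1))
  | var   : Valid Γ → Γ[n]? = some A → TypingM Γ (.var n) (lift (n+1) 0 A)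
  | pi1   : TypingM Γ A (.type j) → TypingM (A :: Γ) B .prop →
            TypingM Γ (.pi A B) .prop
  | pi2'  : TypingM Γ A (TType j) → TypingM (A :: Γ) B (TType k) → 0 ≤ k →
            TypingM Γ (.pi A B) (TType (max (max j k) 0))
  | sig'  : TypingM Γ A (TType j) → TypingM (A :: Γ) B (TType k) →
            TypingM Γ (.sigma A B) (TType (max (max j k) 0))
  | lam   : TypingM (A :: Γ) M B → TypingM Γ (.lam A M) (.pi A B)
  | app'  : TypingM Γ M (.pi A B) → TypingM Γ N A' → Cum A' A →
            TypingM Γ (.app M N) (subst0 B N)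
  | pair' : TypingM Γ M A → TypingM Γ N C → TypingM (A' :: Γ) B' (.type j) →
            Cum A A' → Cum C (subst0 B' M) →
            TypingM Γ (.pair M N (.sigma A' B')) (.sigma A' B')
  | proj1 : TypingM Γ M (.sigma A B) → TypingM Γ (.proj1 M) A
  | proj2 : TypingM Γ M (.sigma A B) → TypingM Γ (.proj2 M) (subst0 B (.proj1 M))
  | conv  : TypingM Γ M A → Conv A A' → Typing Γ A' (.type j) → TypingM Γ M A'

end ECC


namespace ECC

open Relation

/-! ### lift/subst interaction lemmas -/

lemma lift_lift_low (d e : ℕ) (t : Term) :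
    ∀ j k, j ≤ k → lift d (k + e) (lift e j t) = lift e j (lift d k t) := by
  induction t with
  | var n =>
    intro j k h
    simp only [lift]; split_ifs <;> simp only [lift] <;> split_ifs <;>
      first | rfl | omega | (exfalso; omega) | (congr 1; omega)
  | prop => intros; rfl
  | type => intros; rfl
  | pi A B ihA ihB =>
    intro j k h
    simp only [lift, Term.pi.injEq]
    refine ⟨ihA _ _ h, ?_⟩
    rw [show k + e + 1 = (k + 1) + e by omega]
    exact ihB _ _ (by omega)
  | sigma A B ihA ihB =>
    intro j k h
    simp only [lift, Term.sigma.injEq]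
    refine ⟨ihA _ _ h, ?_⟩
    rw [show k + e + 1 = (k + 1) + e by omega]
    exact ihB _ _ (by omega)
  | lam A M ihA ihM =>
    intro j k h
    simp only [lift, Term.lam.injEq]
    refine ⟨ihA _ _ h, ?_⟩
    rw [show k + e + 1 = (k + 1) + e by omega]
    exact ihM _ _ (by omega)
  | app M N ihM ihN =>
    intro j k h
    simp only [lift, Term.app.injEq]
    exact ⟨ihM _ _ h, ihN _ _ h⟩
  | pair M N B ihM ihN ihB =>
    intro j k h
    simp only [lift, Term.pair.injEq]
    exact ⟨ihM _ _ h, ihN _ _ h, ihB _ _ h⟩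
  | proj1 M ih =>
    intro j k h
    simp only [lift, Term.proj1.injEq]
    exact ih _ _ h
  | proj2 M ih =>
    intro j k h
    simp only [lift, Term.proj2.injEq]
    exact ih _ _ h

lemma lift_lift_fuse (d e : ℕ) (t : Term) :
    ∀ j k, k ≤ j → j ≤ k + d → lift e j (lift d k t) = lift (d + e) k t := by
  induction t with
  | var n =>
    intro j k h1 h2
    simp only [lift]; split_ifs <;> simp only [lift] <;> split_ifs <;>
      first | rfl | omega | (exfalso; omega) | (congr 1; omega)
  | prop => intros; rfl
  | type => intros; rfl
  | pi A B ihA ihB =>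
    intro j k h1 h2
    simp only [lift, Term.pi.injEq]
    exact ⟨ihA _ _ h1 h2, ihB _ _ (by omega) (by omega)⟩
  | sigma A B ihA ihB =>
    intro j k h1 h2
    simp only [lift, Term.sigma.injEq]
    exact ⟨ihA _ _ h1 h2, ihB _ _ (by omega) (by omega)⟩
  | lam A M ihA ihM =>
    intro j k h1 h2
    simp only [lift, Term.lam.injEq]
    exact ⟨ihA _ _ h1 h2, ihM _ _ (by omega) (by omega)⟩
  | app M N ihM ihN =>
    intro j k h1 h2
    simp only [lift, Term.app.injEq]
    exact ⟨ihM _ _ h1 h2, ihN _ _ h1 h2⟩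
  | pair M N B ihM ihN ihB =>
    intro j k h1 h2
    simp only [lift, Term.pair.injEq]
    exact ⟨ihM _ _ h1 h2, ihN _ _ h1 h2, ihB _ _ h1 h2⟩
  | proj1 M ih =>
    intro j k h1 h2
    simp only [lift, Term.proj1.injEq]
    exact ih _ _ h1 h2
  | proj2 M ih =>
    intro j k h1 h2
    simp only [lift, Term.proj2.injEq]
    exact ih _ _ h1 h2

lemma subst_lift_cancel (N : Term) (d : ℕ) (t : Term) :
    ∀ j k, k ≤ j → j ≤ k + d → subst N j (lift (d + 1) k t) = lift d k t := by
  induction t with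
  | var n =>
    intro j k h1 h2
    simp only [lift, subst]; split_ifs <;> simp only [subst] <;> split_ifs <;>
      first | rfl | omega | (exfalso; omega) | (congr 1; omega)
  | prop => intros; rfl
  | type => intros; rfl
  | pi A B ihA ihB =>
    intro j k h1 h2
    simp only [lift, subst, Term.pi.injEq]
    exact ⟨ihA _ _ h1 h2, ihB _ _ (by omega) (by omega)⟩
  | sigma A B ihA ihB =>
    intro j k h1 h2
    simp only [lift, subst, Term.sigma.injEq]
    exact ⟨ihA _ _ h1 h2, ihB _ _ (by omega) (by omega)⟩
  | lam A M ihA ihM =>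
    intro j k h1 h2
    simp only [lift, subst, Term.lam.injEq]
    exact ⟨ihA _ _ h1 h2, ihM _ _ (by omega) (by omega)⟩
  | app M N ihM ihN =>
    intro j k h1 h2
    simp only [lift, subst, Term.app.injEq]
    exact ⟨ihM _ _ h1 h2, ihN _ _ h1 h2⟩
  | pair M N B ihM ihN ihB =>
    intro j k h1 h2
    simp only [lift, subst, Term.pair.injEq]
    exact ⟨ihM _ _ h1 h2, ihN _ _ h1 h2, ihB _ _ h1 h2⟩
  | proj1 M ih =>
    intro j k h1 h2
    simp only [lift, subst, Term.proj1.injEq]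
    exact ih _ _ h1 h2
  | proj2 M ih =>
    intro j k h1 h2
    simp only [lift, subst, Term.proj2.injEq]
    exact ih _ _ h1 h2

lemma lift_subst (N : Term) (d k : ℕ) (t : Term) :
    ∀ j, lift d (j + k) (subst N j t) = subst (lift d k N) j (lift d (j + k + 1) t) := by
  induction t with
  | var n =>
    intro j
    simp only [lift, subst]
    split_ifs <;> (try simp only [lift, subst]) <;> (try split_ifs) <;>
      first
      | rfl
      | omega
      | (exfalso; omega)
      | (congr 1; omega)
      | (rw [show j + k = k + j by omega, lift_lift_low d j N 0 k (Nat.zero_le _)])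
  | prop => intros; rfl
  | type => intros; rfl
  | pi A B ihA ihB =>
    intro j
    simp only [lift, subst, Term.pi.injEq]
    refine ⟨ihA j, ?_⟩
    have := ihB (j + 1)
    rw [show j + 1 + k = j + k + 1 by omega] at this
    exact this
  | sigma A B ihA ihB =>
    intro j
    simp only [lift, subst, Term.sigma.injEq]
    refine ⟨ihA j, ?_⟩
    have := ihB (j + 1)
    rw [show j + 1 + k = j + k + 1 by omega] at this
    exact this
  | lam A M ihA ihM =>
    intro j
    simp only [lift, subst, Term.lam.injEq]
    refine ⟨ihA j, ?_⟩
    have := ihM (j + 1)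
    rw [show j + 1 + k = j + k + 1 by omega] at this
    exact this
  | app M N ihM ihN =>
    intro j
    simp only [lift, subst, Term.app.injEq]
    exact ⟨ihM j, ihN j⟩
  | pair M N B ihM ihN ihB =>
    intro j
    simp only [lift, subst, Term.pair.injEq]
    exact ⟨ihM j, ihN j, ihB j⟩
  | proj1 M ih =>
    intro j
    simp only [lift, subst, Term.proj1.injEq]
    exact ih j
  | proj2 M ih =>
    intro j
    simp only [lift, subst, Term.proj2.injEq]
    exact ih j

lemma subst_lift_comm (N : Term) (i k : ℕ) (t : Term) :
    ∀ m, subst N (m + i + k) (lift i m t) = lift i m (subst N (m + k) t) := by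
  induction t with
  | var n =>
    intro m
    simp only [lift, subst]
    split_ifs <;> (try simp only [lift, subst]) <;> (try split_ifs) <;>
      first
      | rfl
      | omega
      | (exfalso; omega)
      | (congr 1; omega)
      | (rw [lift_lift_fuse (m + k) i N m 0 (Nat.zero_le _) (by omega)]; congr 1; omega)
  | prop => intros; rfl
  | type => intros; rfl
  | pi A B ihA ihB =>
    intro m
    simp only [lift, subst, Term.pi.injEq]
    refine ⟨ihA m, ?_⟩
    have := ihB (m + 1)
    rw [show m + 1 + i + k = m + i + k + 1 by omega, show m + 1 + k = m + k + 1 by omega] at this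
    exact this
  | sigma A B ihA ihB =>
    intro m
    simp only [lift, subst, Term.sigma.injEq]
    refine ⟨ihA m, ?_⟩
    have := ihB (m + 1)
    rw [show m + 1 + i + k = m + i + k + 1 by omega, show m + 1 + k = m + k + 1 by omega] at this
    exact this
  | lam A M ihA ihM =>
    intro m
    simp only [lift, subst, Term.lam.injEq]
    refine ⟨ihA m, ?_⟩
    have := ihM (m + 1)
    rw [show m + 1 + i + k = m + i + k + 1 by omega, show m + 1 + k = m + k + 1 by omega] at this
    exact this
  | app M N ihM ihN =>
    intro m
    simp only [lift, subst, Term.app.injEq]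
    exact ⟨ihM m, ihN m⟩
  | pair M N B ihM ihN ihB =>
    intro m
    simp only [lift, subst, Term.pair.injEq]
    exact ⟨ihM m, ihN m, ihB m⟩
  | proj1 M ih =>
    intro m
    simp only [lift, subst, Term.proj1.injEq]
    exact ih m
  | proj2 M ih =>
    intro m
    simp only [lift, subst, Term.proj2.injEq]
    exact ih m

lemma subst_subst (N Q : Term) (j : ℕ) (t : Term) :
    ∀ i, subst N (i + j) (subst Q i t) = subst (subst N j Q) i (subst N (i + j + 1) t) := by
  induction t with
  | var n =>
    intro i
    simp only [subst]
    split_ifs <;> (try simp only [subst, lift]) <;> (try split_ifs) <;>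
      first
      | rfl
      | omega
      | (exfalso; omega)
      | (congr 1; omega)
      | (simpa using subst_lift_comm N i j Q 0)
      | (simpa using (subst_lift_comm N i j Q 0).symm)
      | (rw [subst_lift_cancel (subst N j Q) (i + j) N i 0 (Nat.zero_le _) (by omega)])
      | (rw [subst_lift_cancel (subst N j Q) (i + j) N i 0 (Nat.zero_le _) (by omega)]; rfl)
  | prop => intros; rfl
  | type => intros; rfl
  | pi A B ihA ihB =>
    intro i
    simp only [subst, Term.pi.injEq]
    refine ⟨ihA i, ?_⟩
    have := ihB (i + 1)
    rw [show i + 1 + j = i + j + 1 by omega] at this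
    exact this
  | sigma A B ihA ihB =>
    intro i
    simp only [subst, Term.sigma.injEq]
    refine ⟨ihA i, ?_⟩
    have := ihB (i + 1)
    rw [show i + 1 + j = i + j + 1 by omega] at this
    exact this
  | lam A M ihA ihM =>
    intro i
    simp only [subst, Term.lam.injEq]
    refine ⟨ihA i, ?_⟩
    have := ihM (i + 1)
    rw [show i + 1 + j = i + j + 1 by omega] at this
    exact this
  | app M N ihM ihN =>
    intro i
    simp only [subst, Term.app.injEq]
    exact ⟨ihM i, ihN i⟩
  | pair M N B ihM ihN ihB =>
    intro i
    simp only [subst, Term.pair.injEq]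
    exact ⟨ihM i, ihN i, ihB i⟩
  | proj1 M ih =>
    intro i
    simp only [subst, Term.proj1.injEq]
    exact ih i
  | proj2 M ih =>
    intro i
    simp only [subst, Term.proj2.injEq]
    exact ih i


/-! ### Parallel reduction and confluence -/

inductive Par : Term → Term → Prop
  | var : Par (.var n) (.var n)
  | prop : Par .prop .prop
  | type : Par (.type j) (.type j)
  | pi : Par A A' → Par B B' → Par (.pi A B) (.pi A' B')
  | sigma : Par A A' → Par B B' → Par (.sigma A B) (.sigma A' B')
  | lam : Par A A' → Par M M' → Par (.lam A M) (.lam A' M')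
  | app : Par M M' → Par N N' → Par (.app M N) (.app M' N')
  | pair : Par M M' → Par N N' → Par B B' → Par (.pair M N B) (.pair M' N' B')
  | proj1 : Par M M' → Par (.proj1 M) (.proj1 M')
  | proj2 : Par M M' → Par (.proj2 M) (.proj2 M')
  | beta : Par M M' → Par N N' → Par (.app (.lam A M) N) (subst0 M' N')
  | pr1 : Par M M' → Par (.proj1 (.pair M N B)) M'
  | pr2 : Par N N' → Par (.proj2 (.pair M N B)) N'

lemma par_refl : ∀ t, Par t t := by
  intro t
  induction t with
  | var n => exact Par.var
  | prop => exact Par.prop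
  | type j => exact Par.type
  | pi _ _ ih1 ih2 => exact Par.pi ih1 ih2
  | sigma _ _ ih1 ih2 => exact Par.sigma ih1 ih2
  | lam _ _ ih1 ih2 => exact Par.lam ih1 ih2
  | app _ _ ih1 ih2 => exact Par.app ih1 ih2
  | pair _ _ _ ih1 ih2 ih3 => exact Par.pair ih1 ih2 ih3
  | proj1 _ ih => exact Par.proj1 ih
  | proj2 _ ih => exact Par.proj2 ih

lemma red_par {t u : Term} (h : Red t u) : Par t u := by
  induction h with
  | beta => exact Par.beta (par_refl _) (par_refl _)
  | pr1 => exact Par.pr1 (par_refl _)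
  | pr2 => exact Par.pr2 (par_refl _)
  | piL _ ih => exact Par.pi ih (par_refl _)
  | piR _ ih => exact Par.pi (par_refl _) ih
  | sigmaL _ ih => exact Par.sigma ih (par_refl _)
  | sigmaR _ ih => exact Par.sigma (par_refl _) ih
  | lamL _ ih => exact Par.lam ih (par_refl _)
  | lamR _ ih => exact Par.lam (par_refl _) ih
  | appL _ ih => exact Par.app ih (par_refl _)
  | appR _ ih => exact Par.app (par_refl _) ih
  | pairL _ ih => exact Par.pair ih (par_refl _) (par_refl _)
  | pairR _ ih => exact Par.pair (par_refl _) ih (par_refl _)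
  | pairB _ ih => exact Par.pair (par_refl _) (par_refl _) ih
  | proj1C _ ih => exact Par.proj1 ih
  | proj2C _ ih => exact Par.proj2 ih

/-- Multi-step reduction. -/
abbrev Reds : Term → Term → Prop := Relation.ReflTransGen Red

lemma reds_congr1 (f : Term → Term) (hf : ∀ x y, Red x y → Red (f x) (f y))
    {a b : Term} (h : Reds a b) : Reds (f a) (f b) :=
  Relation.ReflTransGen.lift (p := Red) f (fun _ _ hxy => hf _ _ hxy) _ _ h

lemma reds_pi {A A' B B' : Term} (hA : Reds A A') (hB : Reds B B') :
    Reds (.pi A B) (.pi A' B') :=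
  (reds_congr1 (fun X => .pi X B) (fun _ _ h => Red.piL h) hA).trans
    (reds_congr1 (fun X => .pi A' X) (fun _ _ h => Red.piR h) hB)

lemma reds_sigma {A A' B B' : Term} (hA : Reds A A') (hB : Reds B B') :
    Reds (.sigma A B) (.sigma A' B') :=
  (reds_congr1 (fun X => .sigma X B) (fun _ _ h => Red.sigmaL h) hA).trans
    (reds_congr1 (fun X => .sigma A' X) (fun _ _ h => Red.sigmaR h) hB)

lemma reds_lam {A A' M M' : Term} (hA : Reds A A') (hM : Reds M M') :
    Reds (.lam A M) (.lam A' M') :=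
  (reds_congr1 (fun X => .lam X M) (fun _ _ h => Red.lamL h) hA).trans
    (reds_congr1 (fun X => .lam A' X) (fun _ _ h => Red.lamR h) hM)

lemma reds_app {M M' N N' : Term} (hM : Reds M M') (hN : Reds N N') :
    Reds (.app M N) (.app M' N') :=
  (reds_congr1 (fun X => .app X N) (fun _ _ h => Red.appL h) hM).trans
    (reds_congr1 (fun X => .app M' X) (fun _ _ h => Red.appR h) hN)

lemma reds_pair {M M' N N' B B' : Term} (hM : Reds M M') (hN : Reds N N') (hB : Reds B B') :
    Reds (.pair M N B) (.pair M' N' B') :=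
  ((reds_congr1 (fun X => .pair X N B) (fun _ _ h => Red.pairL h) hM).trans
    (reds_congr1 (fun X => .pair M' X B) (fun _ _ h => Red.pairR h) hN)).trans
    (reds_congr1 (fun X => .pair M' N' X) (fun _ _ h => Red.pairB h) hB)

lemma reds_proj1 {M M' : Term} (hM : Reds M M') : Reds (.proj1 M) (.proj1 M') :=
  reds_congr1 Term.proj1 (fun _ _ h => Red.proj1C h) hM

lemma reds_proj2 {M M' : Term} (hM : Reds M M') : Reds (.proj2 M) (.proj2 M') :=
  reds_congr1 Term.proj2 (fun _ _ h => Red.proj2C h) hM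

lemma par_reds {t u : Term} (h : Par t u) : Reds t u := by
  induction h with
  | var => exact .refl
  | prop => exact .refl
  | type => exact .refl
  | pi _ _ ih1 ih2 => exact reds_pi ih1 ih2
  | sigma _ _ ih1 ih2 => exact reds_sigma ih1 ih2
  | lam _ _ ih1 ih2 => exact reds_lam ih1 ih2
  | app _ _ ih1 ih2 => exact reds_app ih1 ih2
  | pair _ _ _ ih1 ih2 ih3 => exact reds_pair ih1 ih2 ih3
  | proj1 _ ih => exact reds_proj1 ih
  | proj2 _ ih => exact reds_proj2 ih
  | beta _ _ ih1 ih2 =>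
    exact (reds_app (reds_lam Relation.ReflTransGen.refl ih1) ih2).tail Red.beta
  | pr1 _ ih => exact (Relation.ReflTransGen.single Red.pr1).trans ih
  | pr2 _ ih => exact (Relation.ReflTransGen.single Red.pr2).trans ih

lemma par_lift {t u : Term} (h : Par t u) : ∀ d k, Par (lift d k t) (lift d k u) := by
  induction h with
  | var =>
    intro d k
    simp only [lift]; split_ifs <;> exact Par.var
  | prop => intro d k; exact Par.prop
  | type => intro d k; exact Par.type
  | pi _ _ ih1 ih2 => intro d k; exact Par.pi (ih1 d k) (ih2 d (k+1))
  | sigma _ _ ih1 ih2 => intro d k; exact Par.sigma (ih1 d k) (ih2 d (k+1))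
  | lam _ _ ih1 ih2 => intro d k; exact Par.lam (ih1 d k) (ih2 d (k+1))
  | app _ _ ih1 ih2 => intro d k; exact Par.app (ih1 d k) (ih2 d k)
  | pair _ _ _ ih1 ih2 ih3 => intro d k; exact Par.pair (ih1 d k) (ih2 d k) (ih3 d k)
  | proj1 _ ih => intro d k; exact Par.proj1 (ih d k)
  | proj2 _ ih => intro d k; exact Par.proj2 (ih d k)
  | @beta M M' N N' A _ _ ih1 ih2 =>
    intro d k
    have heq := lift_subst N' d k M' 0
    simp only [Nat.zero_add] at heq
    simp only [lift, subst0]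
    rw [heq]
    exact Par.beta (ih1 d (k+1)) (ih2 d k)
  | pr1 _ ih => intro d k; exact Par.pr1 (ih d k)
  | pr2 _ ih => intro d k; exact Par.pr2 (ih d k)

lemma par_subst {t t' N N' : Term} (h : Par t t') (hN : Par N N') :
    ∀ k, Par (subst N k t) (subst N' k t') := by
  induction h with
  | var =>
    intro k
    simp only [subst]; split_ifs
    · exact Par.var
    · exact par_lift hN k 0
    · exact Par.var
  | prop => intro k; exact Par.prop
  | type => intro k; exact Par.type
  | pi _ _ ih1 ih2 => intro k; exact Par.pi (ih1 k) (ih2 (k+1))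
  | sigma _ _ ih1 ih2 => intro k; exact Par.sigma (ih1 k) (ih2 (k+1))
  | lam _ _ ih1 ih2 => intro k; exact Par.lam (ih1 k) (ih2 (k+1))
  | app _ _ ih1 ih2 => intro k; exact Par.app (ih1 k) (ih2 k)
  | pair _ _ _ ih1 ih2 ih3 => intro k; exact Par.pair (ih1 k) (ih2 k) (ih3 k)
  | proj1 _ ih => intro k; exact Par.proj1 (ih k)
  | proj2 _ ih => intro k; exact Par.proj2 (ih k)
  | @beta M M' P P' A _ _ ih1 ih2 =>
    intro k
    have heq := subst_subst N' P' k M' 0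
    simp only [Nat.zero_add] at heq
    simp only [subst, subst0]
    rw [heq]
    exact Par.beta (ih1 (k+1)) (ih2 k)
  | pr1 _ ih => intro k; exact Par.pr1 (ih k)
  | pr2 _ ih => intro k; exact Par.pr2 (ih k)

/-- Complete development. -/
def cd : Term → Term
  | .var n => .var n
  | .prop => .prop
  | .type j => .type j
  | .pi A B => .pi (cd A) (cd B)
  | .sigma A B => .sigma (cd A) (cd B)
  | .lam A M => .lam (cd A) (cd M)
  | .app (.lam _ M) N => subst0 (cd M) (cd N)
  | .app M N => .app (cd M) (cd N)
  | .pair M N B => .pair (cd M) (cd N) (cd B)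
  | .proj1 (.pair M _ _) => cd M
  | .proj1 M => .proj1 (cd M)
  | .proj2 (.pair _ N _) => cd N
  | .proj2 M => .proj2 (cd M)

lemma cd_app_ne_lam {M N : Term} (h : ∀ A P, M ≠ .lam A P) :
    cd (.app M N) = .app (cd M) (cd N) := by
  cases M <;> first | rfl | (exact absurd rfl (h _ _))

lemma cd_proj1_ne_pair {M : Term} (h : ∀ P Q B, M ≠ .pair P Q B) :
    cd (.proj1 M) = .proj1 (cd M) := by
  cases M <;> first | rfl | (exact absurd rfl (h _ _ _))

lemma cd_proj2_ne_pair {M : Term} (h : ∀ P Q B, M ≠ .pair P Q B) :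
    cd (.proj2 M) = .proj2 (cd M) := by
  cases M <;> first | rfl | (exact absurd rfl (h _ _ _))

lemma par_lam_inv {A M u : Term} (h : Par (.lam A M) u) :
    ∃ A' M', u = .lam A' M' ∧ Par A A' ∧ Par M M' := by
  cases h with
  | lam h1 h2 => exact ⟨_, _, rfl, h1, h2⟩

lemma par_pair_inv {M N B u : Term} (h : Par (.pair M N B) u) :
    ∃ M' N' B', u = .pair M' N' B' ∧ Par M M' ∧ Par N N' ∧ Par B B' := by
  cases h with
  | pair h1 h2 h3 => exact ⟨_, _, _, rfl, h1, h2, h3⟩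

lemma par_triangle {t u : Term} (h : Par t u) : Par u (cd t) := by
  induction h with
  | var => exact Par.var
  | prop => exact Par.prop
  | type => exact Par.type
  | pi _ _ ih1 ih2 => exact Par.pi ih1 ih2
  | sigma _ _ ih1 ih2 => exact Par.sigma ih1 ih2
  | lam _ _ ih1 ih2 => exact Par.lam ih1 ih2
  | @app M M' N N' hM hN ihM ihN =>
    by_cases hlam : ∃ A P, M = Term.lam A P
    · obtain ⟨A, P, rfl⟩ := hlam
      obtain ⟨A', P', rfl, hA, hP⟩ := par_lam_inv hM
      obtain ⟨A2, P2, heq, hA2, hP2⟩ := par_lam_inv ihM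
      have hA2' : Par A' (cd A) := by
        have : cd (Term.lam A P) = Term.lam (cd A) (cd P) := rfl
        rw [this] at heq
        cases heq; exact hA2
      have hP2' : Par P' (cd P) := by
        have : cd (Term.lam A P) = Term.lam (cd A) (cd P) := rfl
        rw [this] at heq
        cases heq; exact hP2
      show Par (Term.app (Term.lam A' P') N') (cd (Term.app (Term.lam A P) N))
      exact Par.beta hP2' ihN
    · rw [cd_app_ne_lam (fun A P hAP => hlam ⟨A, P, hAP⟩)]
      exact Par.app ihM ihN
  | pair _ _ _ ih1 ih2 ih3 => exact Par.pair ih1 ih2 ih3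
  | @proj1 M M' hM ihM =>
    by_cases hp : ∃ P Q B, M = Term.pair P Q B
    · obtain ⟨P, Q, B, rfl⟩ := hp
      obtain ⟨P', Q', B', rfl, h1, h2, h3⟩ := par_pair_inv hM
      obtain ⟨P2, Q2, B2, heq, h4, h5, h6⟩ := par_pair_inv ihM
      have : cd (Term.pair P Q B) = Term.pair (cd P) (cd Q) (cd B) := rfl
      rw [this] at heq
      cases heq
      have hcd : cd (Term.proj1 (Term.pair P Q B)) = cd P := rfl
      rw [hcd]
      exact Par.pr1 h4
    · rw [cd_proj1_ne_pair (fun P Q B hPQ => hp ⟨P, Q, B, hPQ⟩)]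
      exact Par.proj1 ihM
  | @proj2 M M' hM ihM =>
    by_cases hp : ∃ P Q B, M = Term.pair P Q B
    · obtain ⟨P, Q, B, rfl⟩ := hp
      obtain ⟨P', Q', B', rfl, h1, h2, h3⟩ := par_pair_inv hM
      obtain ⟨P2, Q2, B2, heq, h4, h5, h6⟩ := par_pair_inv ihM
      have : cd (Term.pair P Q B) = Term.pair (cd P) (cd Q) (cd B) := rfl
      rw [this] at heq
      cases heq
      have hcd : cd (Term.proj2 (Term.pair P Q B)) = cd Q := rfl
      rw [hcd]
      exact Par.pr2 h5
    · rw [cd_proj2_ne_pair (fun P Q B hPQ => hp ⟨P, Q, B, hPQ⟩)]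
      exact Par.proj2 ihM
  | @beta M M' N N' A _ _ ih1 ih2 =>
    exact par_subst ih1 ih2 0
  | @pr1 M M' N B _ ihM => exact ihM
  | @pr2 N N' M B _ ihN => exact ihN

lemma par_diamond {t u v : Term} (hu : Par t u) (hv : Par t v) :
    ∃ w, Par u w ∧ Par v w :=
  ⟨cd t, par_triangle hu, par_triangle hv⟩

lemma reds_confluent {a b c : Term} (hab : Reds a b) (hac : Reds a c) :
    ∃ d, Reds b d ∧ Reds c d := by
  have h := Relation.church_rosser (r := Par)
    (fun a b c hb hc => by
      obtain ⟨d, h1, h2⟩ := par_diamond hb hc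
      exact ⟨d, Relation.ReflGen.single h1, Relation.ReflTransGen.single h2⟩)
    (Relation.ReflTransGen.mono (fun _ _ h => red_par h) _ _ hab)
    (Relation.ReflTransGen.mono (fun _ _ h => red_par h) _ _ hac)
  obtain ⟨d, h1, h2⟩ := h
  exact ⟨d, Relation.reflTransGen_closed (fun _ _ h => par_reds h) _ _ h1,
    Relation.reflTransGen_closed (fun _ _ h => par_reds h) _ _ h2⟩

lemma conv_of_reds {a b : Term} (h : Reds a b) : Conv a b := by
  induction h with
  | refl => exact Relation.EqvGen.refl _
  | tail _ h2 ih => exact Relation.EqvGen.trans _ _ _ ih (Relation.EqvGen.rel _ _ h2)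

lemma conv_cr {a b : Term} (h : Conv a b) : ∃ c, Reds a c ∧ Reds b c := by
  induction h with
  | rel _ _ h => exact ⟨_, Relation.ReflTransGen.single h, Relation.ReflTransGen.refl⟩
  | refl a => exact ⟨a, Relation.ReflTransGen.refl, Relation.ReflTransGen.refl⟩
  | symm _ _ _ ih => obtain ⟨c, h1, h2⟩ := ih; exact ⟨c, h2, h1⟩
  | trans _ _ _ _ _ ih1 ih2 =>
    obtain ⟨d1, h1, h2⟩ := ih1
    obtain ⟨d2, h3, h4⟩ := ih2
    obtain ⟨e, h5, h6⟩ := reds_confluent h2 h3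
    exact ⟨e, h1.trans h5, h4.trans h6⟩

end ECC


namespace ECC

open Relation

/-! ### Conversion and normal forms -/

lemma conv_symm {a b : Term} (h : Conv a b) : Conv b a := EqvGen.symm _ _ h

lemma conv_trans {a b c : Term} (h1 : Conv a b) (h2 : Conv b c) : Conv a c :=
  EqvGen.trans _ _ _ h1 h2

lemma conv_congr1 (f : Term → Term) (hf : ∀ x y, Red x y → Red (f x) (f y))
    {a b : Term} (h : Conv a b) : Conv (f a) (f b) := by
  induction h with
  | rel _ _ h => exact EqvGen.rel _ _ (hf _ _ h)
  | refl a => exact EqvGen.refl _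
  | symm _ _ _ ih => exact EqvGen.symm _ _ ih
  | trans _ _ _ _ _ ih1 ih2 => exact EqvGen.trans _ _ _ ih1 ih2

lemma conv_pi {A A' B B' : Term} (hA : Conv A A') (hB : Conv B B') :
    Conv (.pi A B) (.pi A' B') :=
  conv_trans (conv_congr1 (fun X => .pi X B) (fun _ _ h => Red.piL h) hA)
    (conv_congr1 (fun X => .pi A' X) (fun _ _ h => Red.piR h) hB)

lemma conv_sigma {A A' B B' : Term} (hA : Conv A A') (hB : Conv B B') :
    Conv (.sigma A B) (.sigma A' B') :=
  conv_trans (conv_congr1 (fun X => .sigma X B) (fun _ _ h => Red.sigmaL h) hA)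
    (conv_congr1 (fun X => .sigma A' X) (fun _ _ h => Red.sigmaR h) hB)

def Normal (t : Term) : Prop := ∀ u, ¬ Red t u

lemma normal_prop : Normal .prop := fun _ h => nomatch h

lemma normal_type (j : ℕ) : Normal (.type j) := fun _ h => nomatch h

lemma normal_pi {A B : Term} (hA : Normal A) (hB : Normal B) : Normal (.pi A B) := by
  intro u h
  cases h with
  | piL h => exact hA _ h
  | piR h => exact hB _ h

lemma normal_sigma {A B : Term} (hA : Normal A) (hB : Normal B) : Normal (.sigma A B) := by
  intro u h
  cases h with
  | sigmaL h => exact hA _ h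
  | sigmaR h => exact hB _ h

lemma reds_normal {a b : Term} (hn : Normal a) (h : Reds a b) : b = a := by
  induction h with
  | refl => rfl
  | tail h1 h2 ih => rw [ih] at h2; exact absurd h2 (hn _)

lemma reds_pi_inv {A B t : Term} (h : Reds (.pi A B) t) :
    ∃ A' B', t = .pi A' B' ∧ Reds A A' ∧ Reds B B' := by
  induction h with
  | refl => exact ⟨A, B, rfl, .refl, .refl⟩
  | tail h1 h2 ih =>
    obtain ⟨A', B', rfl, hA, hB⟩ := ih
    cases h2 with
    | piL h => exact ⟨_, _, rfl, hA.tail h, hB⟩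
    | piR h => exact ⟨_, _, rfl, hA, hB.tail h⟩

lemma reds_sigma_inv {A B t : Term} (h : Reds (.sigma A B) t) :
    ∃ A' B', t = .sigma A' B' ∧ Reds A A' ∧ Reds B B' := by
  induction h with
  | refl => exact ⟨A, B, rfl, .refl, .refl⟩
  | tail h1 h2 ih =>
    obtain ⟨A', B', rfl, hA, hB⟩ := ih
    cases h2 with
    | sigmaL h => exact ⟨_, _, rfl, hA.tail h, hB⟩
    | sigmaR h => exact ⟨_, _, rfl, hA, hB.tail h⟩

lemma hasNF_conv {a b : Term} (h : Conv a b) (ha : HasNF a) : HasNF b := by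
  obtain ⟨W, hW, hWn⟩ := ha
  have hconv : Conv b W := conv_trans (conv_symm h) (conv_of_reds hW)
  obtain ⟨c, hbc, hWc⟩ := conv_cr hconv
  have hc : c = W := reds_normal hWn hWc
  rw [hc] at hbc
  exact ⟨W, hbc, hWn⟩

lemma not_conv_prop_type {j : ℕ} (h : Conv .prop (.type j)) : False := by
  obtain ⟨c, h1, h2⟩ := conv_cr h
  have e1 := reds_normal normal_prop h1
  have e2 := reds_normal (normal_type j) h2
  rw [e1] at e2
  exact Term.noConfusion e2

lemma conv_type_type {j k : ℕ} (h : Conv (.type j) (.type k)) : j = k := by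
  obtain ⟨c, h1, h2⟩ := conv_cr h
  have e1 := reds_normal (normal_type j) h1
  have e2 := reds_normal (normal_type k) h2
  rw [e1] at e2
  exact Term.type.inj e2

lemma conv_pi_inv {A B A' B' : Term} (h : Conv (.pi A B) (.pi A' B')) :
    Conv A A' ∧ Conv B B' := by
  obtain ⟨c, h1, h2⟩ := conv_cr h
  obtain ⟨A0, B0, rfl, hA, hB⟩ := reds_pi_inv h1
  obtain ⟨A1, B1, heq, hA', hB'⟩ := reds_pi_inv h2
  injection heq with e1 e2
  subst e1; subst e2
  exact ⟨conv_trans (conv_of_reds hA) (conv_symm (conv_of_reds hA')),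
    conv_trans (conv_of_reds hB) (conv_symm (conv_of_reds hB'))⟩

lemma hasNF_pi {A B : Term} (hA : HasNF A) (hB : HasNF B) : HasNF (.pi A B) := by
  obtain ⟨A0, h1, h2⟩ := hA
  obtain ⟨B0, h3, h4⟩ := hB
  exact ⟨.pi A0 B0, reds_pi h1 h3, normal_pi h2 h4⟩

lemma hasNF_sigma {A B : Term} (hA : HasNF A) (hB : HasNF B) : HasNF (.sigma A B) := by
  obtain ⟨A0, h1, h2⟩ := hA
  obtain ⟨B0, h3, h4⟩ := hB
  exact ⟨.sigma A0 B0, reds_sigma h1 h3, normal_sigma h2 h4⟩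

lemma hasNF_pi_inv {A B : Term} (h : HasNF (.pi A B)) : HasNF A ∧ HasNF B := by
  obtain ⟨W, h1, h2⟩ := h
  obtain ⟨A0, B0, rfl, hA, hB⟩ := reds_pi_inv h1
  exact ⟨⟨A0, hA, fun u hu => h2 _ (Red.piL hu)⟩, ⟨B0, hB, fun u hu => h2 _ (Red.piR hu)⟩⟩

lemma hasNF_sigma_inv {A B : Term} (h : HasNF (.sigma A B)) : HasNF A ∧ HasNF B := by
  obtain ⟨W, h1, h2⟩ := h
  obtain ⟨A0, B0, rfl, hA, hB⟩ := reds_sigma_inv h1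
  exact ⟨⟨A0, hA, fun u hu => h2 _ (Red.sigmaL hu)⟩, ⟨B0, hB, fun u hu => h2 _ (Red.sigmaR hu)⟩⟩

/-! ### Strict monotonicity of the rank function -/

lemma cumL_strict (φ : Term → ℕ) (hφ : PhiSpec φ) :
    ∀ (i : ℕ) (M N : Term), CumL i M N → HasNF M → HasNF N → ¬ Conv M N → φ M < φ N := by
  intro i M N h
  induction h with
  | conv h => exact fun _ _ hnc => absurd h hnc
  | @propType i j =>
    intro hM hN _
    rw [hφ.2.1 _ hM (EqvGen.refl _), hφ.2.2.1 _ j hN (EqvGen.refl _)]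
    omega
  | @typeType j k i hjk =>
    intro hM hN _
    rw [hφ.2.2.1 _ j hM (EqvGen.refl _), hφ.2.2.1 _ k hN (EqvGen.refl _)]
    omega
  | succ _ ih => exact ih
  | @pi M A B N A' B' i hM hN hAA' hBB' ih =>
    intro hMn hNn hnc
    obtain ⟨hAnf, hBnf⟩ := hasNF_pi_inv (hasNF_conv hM hMn)
    obtain ⟨hA'nf, hB'nf⟩ := hasNF_pi_inv (hasNF_conv hN hNn)
    have hncB : ¬ Conv B B' := fun hc =>
      hnc (conv_trans hM (conv_trans (conv_pi hAA' hc) (conv_symm hN)))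
    have hφM : φ M = φ A * φ B := hφ.2.2.2.2.1 M A B hMn (Or.inl hM)
    have hφN : φ N = φ A' * φ B' := hφ.2.2.2.2.1 N A' B' hNn (Or.inl hN)
    have hAe : φ A = φ A' := hφ.1 A A' hAnf hA'nf hAA'
    have hBlt : φ B < φ B' := ih hBnf hB'nf hncB
    have hApos : 0 < φ A' := hφ.2.2.2.2.2 A' hA'nf
    rw [hφM, hφN, hAe]
    exact mul_lt_mul_of_pos_left hBlt hApos
  | @sigma M A B N A' B' i hM hN hAA' hBB' ihA ihB =>
    intro hMn hNn hnc
    obtain ⟨hAnf, hBnf⟩ := hasNF_sigma_inv (hasNF_conv hM hMn)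
    obtain ⟨hA'nf, hB'nf⟩ := hasNF_sigma_inv (hasNF_conv hN hNn)
    have hφM : φ M = φ A * φ B := hφ.2.2.2.2.1 M A B hMn (Or.inr hM)
    have hφN : φ N = φ A' * φ B' := hφ.2.2.2.2.1 N A' B' hNn (Or.inr hN)
    have hBpos : 0 < φ B := hφ.2.2.2.2.2 B hBnf
    have hA'pos : 0 < φ A' := hφ.2.2.2.2.2 A' hA'nf
    rw [hφM, hφN]
    by_cases hca : Conv A A'
    · have hAe : φ A = φ A' := hφ.1 A A' hAnf hA'nf hca
      have hncB : ¬ Conv B B' := fun hc =>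
        hnc (conv_trans hM (conv_trans (conv_sigma hca hc) (conv_symm hN)))
      have hBlt : φ B < φ B' := ihB hBnf hB'nf hncB
      rw [hAe]
      exact mul_lt_mul_of_pos_left hBlt hA'pos
    · have hAlt : φ A < φ A' := ihA hAnf hA'nf hca
      have hBle : φ B ≤ φ B' := by
        by_cases hcb : Conv B B'
        · exact le_of_eq (hφ.1 B B' hBnf hB'nf hcb)
        · exact le_of_lt (ihB hBnf hB'nf hcb)
      exact lt_of_lt_of_le (mul_lt_mul_of_pos_right hAlt hBpos)
        (Nat.mul_le_mul_left _ hBle)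

lemma cum_hasNF : ∀ {M N : Term}, Cum M N → HasNF M → HasNF N := by
  intro M N h
  induction h with
  | conv h => exact fun hM => hasNF_conv h hM
  | propType => exact fun _ => ⟨.type 0, .refl, normal_type 0⟩
  | typeType _ => exact fun _ => ⟨_, .refl, normal_type _⟩
  | pi hA _ ihB =>
    intro hM
    obtain ⟨hAnf, hBnf⟩ := hasNF_pi_inv hM
    exact hasNF_pi (hasNF_conv hA hAnf) (ihB hBnf)
  | sigma _ _ ihA ihB =>
    intro hM
    obtain ⟨hAnf, hBnf⟩ := hasNF_sigma_inv hM
    exact hasNF_sigma (ihA hAnf) (ihB hBnf)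
  | trans _ _ ih1 ih2 => exact fun hM => ih2 (ih1 hM)

lemma cum_mono (φ : Term → ℕ) (hφ : PhiSpec φ) :
    ∀ (M N : Term), Cum M N → HasNF M → HasNF N →
      φ M ≤ φ N ∧ (¬ Conv M N → φ M < φ N) := by
  intro M N h
  induction h with
  | conv h =>
    intro hM hN
    exact ⟨le_of_eq (hφ.1 _ _ hM hN h), fun hnc => absurd h hnc⟩
  | propType =>
    intro hM hN
    rw [hφ.2.1 _ hM (EqvGen.refl _), hφ.2.2.1 _ 0 hN (EqvGen.refl _)]
    exact ⟨by omega, fun _ => by omega⟩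
  | @typeType j k hjk =>
    intro hM hN
    rw [hφ.2.2.1 _ j hM (EqvGen.refl _), hφ.2.2.1 _ k hN (EqvGen.refl _)]
    refine ⟨by omega, fun hnc => ?_⟩
    have : j ≠ k := fun e => hnc (e ▸ EqvGen.refl _)
    omega
  | @pi A A' B B' hA hC ihB =>
    intro hM hN
    obtain ⟨hAnf, hBnf⟩ := hasNF_pi_inv hM
    obtain ⟨hA'nf, hB'nf⟩ := hasNF_pi_inv hN
    obtain ⟨hBle, hBlt⟩ := ihB hBnf hB'nf
    have hφM : φ (Term.pi A B) = φ A * φ B :=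
      hφ.2.2.2.2.1 _ A B hM (Or.inl (EqvGen.refl _))
    have hφN : φ (Term.pi A' B') = φ A' * φ B' :=
      hφ.2.2.2.2.1 _ A' B' hN (Or.inl (EqvGen.refl _))
    have hAe : φ A = φ A' := hφ.1 A A' hAnf hA'nf hA
    have hA'pos : 0 < φ A' := hφ.2.2.2.2.2 A' hA'nf
    rw [hφM, hφN, hAe]
    refine ⟨Nat.mul_le_mul_left _ hBle, fun hnc => ?_⟩
    have hncB : ¬ Conv B B' := fun hc => hnc (conv_pi hA hc)
    exact mul_lt_mul_of_pos_left (hBlt hncB) hA'pos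
  | @sigma A A' B B' hA hB ihA ihB =>
    intro hM hN
    obtain ⟨hAnf, hBnf⟩ := hasNF_sigma_inv hM
    obtain ⟨hA'nf, hB'nf⟩ := hasNF_sigma_inv hN
    obtain ⟨hAle, hAlt⟩ := ihA hAnf hA'nf
    obtain ⟨hBle, hBlt⟩ := ihB hBnf hB'nf
    have hφM : φ (Term.sigma A B) = φ A * φ B :=
      hφ.2.2.2.2.1 _ A B hM (Or.inr (EqvGen.refl _))
    have hφN : φ (Term.sigma A' B') = φ A' * φ B' :=
      hφ.2.2.2.2.1 _ A' B' hN (Or.inr (EqvGen.refl _))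
    have hBpos : 0 < φ B := hφ.2.2.2.2.2 B hBnf
    have hA'pos : 0 < φ A' := hφ.2.2.2.2.2 A' hA'nf
    rw [hφM, hφN]
    refine ⟨Nat.mul_le_mul hAle hBle, fun hnc => ?_⟩
    by_cases hca : Conv A A'
    · have hAe : φ A = φ A' := hφ.1 A A' hAnf hA'nf hca
      have hncB : ¬ Conv B B' := fun hc => hnc (conv_sigma hca hc)
      rw [hAe]
      exact mul_lt_mul_of_pos_left (hBlt hncB) hA'pos
    · exact lt_of_lt_of_le (mul_lt_mul_of_pos_right (hAlt hca) hBpos)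
        (Nat.mul_le_mul_left _ hBle)
  | @trans A B C h1 h2 ih1 ih2 =>
    intro hM hN
    have hBnf : HasNF B := cum_hasNF h1 hM
    obtain ⟨le1, lt1⟩ := ih1 hM hBnf
    obtain ⟨le2, lt2⟩ := ih2 hBnf hN
    refine ⟨le1.trans le2, fun hnc => ?_⟩
    by_cases hc1 : Conv A B
    · have he : φ A = φ B := hφ.1 _ _ hM hBnf hc1
      have hnc2 : ¬ Conv B C := fun h => hnc (conv_trans hc1 h)
      exact he ▸ lt2 hnc2
    · exact lt_of_lt_of_le (lt1 hc1) le2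

end ECC

/-- the rank function `φ` is strictly monotone with respect to strict
cumulativity: for `M, N ∈ 𝒯` and `i ∈ ω`, `M ≺ᵢ N` implies `φ(M) < φ(N)`; consequently
`M ≺ N` implies `φ(M) < φ(N)`. -/
theorem rank_strict_mono (φ : ECC.Term → ℕ) (hφ : ECC.PhiSpec φ) :
    (∀ (i : ℕ) (M N : ECC.Term), ECC.HasNF M → ECC.HasNF N →
      ECC.SCumL i M N → φ M < φ N) ∧
    (∀ M N : ECC.Term, ECC.HasNF M → ECC.HasNF N →
      ECC.SCum M N → φ M < φ N) := by
  constructor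
  · intro i M N hM hN h
    exact ECC.cumL_strict φ hφ i M N h.1 hM hN h.2
  · intro M N hM hN h
    exact (ECC.cum_mono φ hφ M N h.1 hM hN).2 h.2
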